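/- Suppose the null hypothesis holds, i.e. P_{XY} = P_X × P_Y. Let (X_1,Y_1), …, (X_n,Y_n) (n ≥ 3) be i.i.d. with law P_X × P_Y, let (X_i',Y_i') be the cyclic permutation of the sample, and let θ̂: 𝒳×𝒴 → [0,1] be a fixed measurable function such that θ̂(X,Y) has an atomless distribution under P_X×P_Y. Define R̃ = n^{-1} Σ_{i=1}^n [1/2 − F₂(θ̂(X_i,Y_i))] + n^{-1} Σ_{i=1}^n [F₂(θ̂(X_i',Y_i')) − 1/2]. Then Var(R̃) = σ*²/n, where σ*² = 1/6 − 2·Cov(F₂(θ̂(X₂,Y₂)), F₂(θ̂(X₁,Y₂))) − 2·Cov(F₂(θ̂(X₂,Y₂)), F₂(θ̂(X₂,Y₃))), the covariances being computed with X₁, X₂ i.i.d. ∼ P_X and Y₁, Y₂, Y₃ i.i.d. ∼ P_Y, all mutually independent. -/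

import Mathlib

open MeasureTheory ProbabilityTheory

/-- The cyclic successor of an index. -/
def cycIdx {n : ℕ} (i : Fin n) : Fin n := ⟨(i.val + 1) % n, Nat.mod_lt _ i.pos⟩

/-- The cyclicly permuted sample: `(Xᵢ', Yᵢ') = (Xᵢ, Y_{i+1})` (indices mod `n`). -/
def cyc {X Y : Type*} {n : ℕ} (Z : Fin n → X × Y) (i : Fin n) : X × Y :=
  ((Z i).1, (Z (cycIdx i)).2)

/-- Cumulative distribution function of `θ` under the measure `m`. -/
noncomputable def cdfOf {X Y : Type*} [MeasurableSpace X] [MeasurableSpace Y]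
    (m : Measure (X × Y)) (θ : X × Y → ℝ) (t : ℝ) : ℝ := (m {z | θ z ≤ t}).toReal

/-- Covariance of two real functions under a measure. -/
noncomputable def covFn {Ω : Type*} [MeasurableSpace Ω] (m : Measure Ω) (f g : Ω → ℝ) : ℝ :=
  (∫ ω, f ω * g ω ∂m) - (∫ ω, f ω ∂m) * ∫ ω, g ω ∂m

/-- The projection statistic
`R̃ = n⁻¹ Σᵢ (1/2 − F₂(θ(Xᵢ,Yᵢ))) + n⁻¹ Σᵢ (F₂(θ(Xᵢ',Yᵢ')) − 1/2)`. -/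
noncomputable def Rtilde {X Y : Type*} {n : ℕ} (F₂ : ℝ → ℝ) (θ : X × Y → ℝ)
    (Z : Fin n → X × Y) : ℝ :=
  (n : ℝ)⁻¹ * (∑ i : Fin n, (1 / 2 - F₂ (θ (Z i))))
    + (n : ℝ)⁻¹ * ∑ i : Fin n, (F₂ (θ (cyc Z i)) - 1 / 2)

open Set Function
open scoped ENNReal

namespace Stmt6Aux

lemma mp_congr {α β : Type*} [MeasurableSpace α] [MeasurableSpace β] {μ : Measure α}
    {ν : Measure β} {f g : α → β} (h : MeasurePreserving f μ ν) (hfg : ∀ x, g x = f x) :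
    MeasurePreserving g μ ν := (funext hfg : g = f) ▸ h

lemma integrable_of_bdd {α : Type*} [MeasurableSpace α] {μ : Measure α} [IsFiniteMeasure μ]
    {f : α → ℝ} (hf : Measurable f) {C : ℝ} (h : ∀ x, |f x| ≤ C) : Integrable f μ :=
  (integrable_const C).mono' hf.aestronglyMeasurable (Filter.Eventually.of_forall h)

lemma intcomp {α β : Type*} [MeasurableSpace α] [MeasurableSpace β] {μ : Measure α}
    {ν : Measure β} {T : α → β} (h : MeasurePreserving T μ ν) {f : β → ℝ} (hf : Measurable f) :
    ∫ x, f (T x) ∂μ = ∫ y, f y ∂ν := by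
  rw [← h.map_eq]
  exact (integral_map h.measurable.aemeasurable hf.aestronglyMeasurable).symm

lemma mp_eval {ι W : Type*} [Fintype ι] [MeasurableSpace W] (Q : Measure W)
    [IsProbabilityMeasure Q] (a : ι) :
    MeasurePreserving (fun x : ι → W => x a) (Measure.pi fun _ => Q) Q where
  measurable := measurable_pi_apply a
  map_eq := by
    classical
    ext s hs
    rw [Measure.map_apply (measurable_pi_apply a) hs,
      show (fun x : ι → W => x a) ⁻¹' s
        = Set.pi Set.univ (Function.update (fun _ => Set.univ) a s) from Set.eval_preimage,
      Measure.pi_pi]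
    rw [Finset.prod_eq_single a (fun b _ hb => by rw [Function.update_of_ne hb]; exact measure_univ)
      (fun h => absurd (Finset.mem_univ a) h), Function.update_self]

lemma mp_pair {ι W : Type*} [Fintype ι] [MeasurableSpace W] (Q : Measure W)
    [IsProbabilityMeasure Q] {a c : ι} (hac : a ≠ c) :
    MeasurePreserving (fun x : ι → W => (x a, x c)) (Measure.pi fun _ => Q) (Q.prod Q) where
  measurable := (measurable_pi_apply a).prodMk (measurable_pi_apply c)
  map_eq := by
    classical
    refine (Measure.prod_eq fun s t hs ht => ?_).symm
    rw [Measure.map_apply ((measurable_pi_apply a).prodMk (measurable_pi_apply c)) (hs.prod ht)]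
    have hset : (fun x : ι → W => (x a, x c)) ⁻¹' s ×ˢ t
        = Set.pi Set.univ (Function.update (Function.update (fun _ => Set.univ) a s) c t) := by
      ext x
      simp only [Set.mem_preimage, Set.mem_prod, Set.mem_univ_pi]
      constructor
      · rintro ⟨h1, h2⟩ i
        rcases eq_or_ne i c with rfl | hic
        · rwa [Function.update_self]
        rcases eq_or_ne i a with rfl | hia
        · rwa [Function.update_of_ne hic, Function.update_self]
        · rw [Function.update_of_ne hic, Function.update_of_ne hia]; trivial
      · intro h
        refine ⟨?_, ?_⟩
        · have := h a; rwa [Function.update_of_ne hac, Function.update_self] at this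
        · have := h c; rwa [Function.update_self] at this
    rw [hset, Measure.pi_pi]
    simp only [Function.apply_update (fun _ y => Q y)]
    rw [Finset.prod_update_of_mem (Finset.mem_univ c),
      Finset.prod_update_of_mem (Finset.mem_sdiff.mpr ⟨Finset.mem_univ a, by simp [hac]⟩)]
    simp [measure_univ, mul_comm]

lemma diag_null (κ : Measure ℝ) [IsProbabilityMeasure κ] (h0 : ∀ t : ℝ, κ {t} = 0) :
    (κ.prod κ) {p : ℝ × ℝ | p.1 = p.2} = 0 := by
  rw [Measure.prod_apply (measurableSet_eq_fun measurable_fst measurable_snd)]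
  simp [h0]

lemma half (κ : Measure ℝ) [IsProbabilityMeasure κ] (h0 : ∀ t : ℝ, κ {t} = 0) :
    (κ.prod κ) {p : ℝ × ℝ | p.2 ≤ p.1} = 1/2 := by
  set A : Set (ℝ × ℝ) := {p | p.2 < p.1} with hA
  set B : Set (ℝ × ℝ) := {p | p.1 < p.2} with hB
  set D : Set (ℝ × ℝ) := {p | p.1 = p.2} with hDdef
  have hAm : MeasurableSet A := measurableSet_lt measurable_snd measurable_fst
  have hBm : MeasurableSet B := measurableSet_lt measurable_fst measurable_snd
  have hDm : MeasurableSet D := measurableSet_eq_fun measurable_fst measurable_snd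
  have hD : (κ.prod κ) D = 0 := diag_null κ h0
  have hBA : (κ.prod κ) B = (κ.prod κ) A := by
    have hswap : MeasurePreserving Prod.swap (κ.prod κ) (κ.prod κ) :=
      Measure.measurePreserving_swap
    have hpre : Prod.swap ⁻¹' A = B := rfl
    rw [← hpre, hswap.measure_preimage hAm.nullMeasurableSet]
  have hunion : A ∪ B ∪ D = univ := by
    ext p
    simp only [hA, hB, hDdef, Set.mem_union, Set.mem_setOf_eq, Set.mem_univ, iff_true]
    rcases lt_trichotomy p.1 p.2 with h | h | h
    · exact Or.inl (Or.inr h)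
    · exact Or.inr h
    · exact Or.inl (Or.inl h)
  have hsum : (κ.prod κ) A + (κ.prod κ) B + (κ.prod κ) D = 1 := by
    rw [← measure_union (by
        simp only [Set.disjoint_left, hA, hB, Set.mem_setOf_eq]
        rintro p h1 h2; exact absurd (h1.trans h2) (lt_irrefl _)) hBm,
      ← measure_union (by
        simp only [Set.disjoint_left, Set.mem_union, hA, hB, hDdef, Set.mem_setOf_eq]
        rintro p (h1 | h1) h2 <;> simp_all [h2]) hDm,
      hunion, measure_univ]
  have h2A : 2 * (κ.prod κ) A = 1 := by
    rw [hBA, hD, add_zero] at hsum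
    rw [two_mul]; exact hsum
  have hAval : (κ.prod κ) A = 1/2 := by
    rw [(ENNReal.eq_div_iff (by norm_num) (by norm_num) : (κ.prod κ) A = 1 / 2 ↔ _)]
    exact h2A
  have hfin : {p : ℝ × ℝ | p.2 ≤ p.1} = A ∪ (D ∩ {p | p.2 ≤ p.1}) := by
    ext p
    simp only [hA, hDdef, Set.mem_union, Set.mem_setOf_eq, Set.mem_inter_iff]
    constructor
    · intro h; rcases lt_or_eq_of_le h with h' | h'
      · exact Or.inl h'
      · exact Or.inr ⟨h'.symm, h⟩
    · rintro (h | ⟨h, h'⟩)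
      · exact le_of_lt h
      · exact h'
  rw [hfin]
  refine le_antisymm ?_ ?_
  · calc (κ.prod κ) (A ∪ (D ∩ {p | p.2 ≤ p.1}))
        ≤ (κ.prod κ) A + (κ.prod κ) (D ∩ {p | p.2 ≤ p.1}) := measure_union_le _ _
    _ ≤ (κ.prod κ) A + (κ.prod κ) D := by gcongr; exact Set.inter_subset_left
    _ = 1/2 := by rw [hD, add_zero, hAval]
  · rw [← hAval]; exact measure_mono Set.subset_union_left

lemma mp_rho (κ : Measure ℝ) [IsProbabilityMeasure κ] :
    MeasurePreserving (fun q : ℝ × ℝ × ℝ => (q.2.1, (q.1, q.2.2)))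
    (κ.prod (κ.prod κ)) (κ.prod (κ.prod κ)) := by
  have e1 := (MeasureTheory.measurePreserving_prodAssoc κ κ κ).symm MeasurableEquiv.prodAssoc
  have e2 := (Measure.measurePreserving_swap (μ := κ) (ν := κ)).prod (MeasurePreserving.id κ)
  have e3 := MeasureTheory.measurePreserving_prodAssoc (α := ℝ) (β := ℝ) (γ := ℝ) κ κ κ
  exact mp_congr ((e3.comp e2).comp e1) (fun q => rfl)

lemma mp_rho' (κ : Measure ℝ) [IsProbabilityMeasure κ] :
    MeasurePreserving (fun q : ℝ × ℝ × ℝ => (q.2.2, (q.2.1, q.1)))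
    (κ.prod (κ.prod κ)) (κ.prod (κ.prod κ)) := by
  have s1 := (MeasurePreserving.id κ).prod (Measure.measurePreserving_swap (μ := κ) (ν := κ))
  have e1 := (MeasureTheory.measurePreserving_prodAssoc κ κ κ).symm MeasurableEquiv.prodAssoc
  have e2 := (Measure.measurePreserving_swap (μ := κ) (ν := κ)).prod (MeasurePreserving.id κ)
  have e3 := MeasureTheory.measurePreserving_prodAssoc (α := ℝ) (β := ℝ) (γ := ℝ) κ κ κ
  have s2 := (MeasurePreserving.id κ).prod (Measure.measurePreserving_swap (μ := κ) (ν := κ))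
  exact mp_congr ((((s2.comp e3).comp e2).comp e1).comp s1) (fun q => rfl)

lemma third (κ : Measure ℝ) [IsProbabilityMeasure κ] (h0 : ∀ t : ℝ, κ {t} = 0) :
    (κ.prod (κ.prod κ)) {q : ℝ × ℝ × ℝ | q.2.1 ≤ q.1 ∧ q.2.2 ≤ q.1} = 1/3 := by
  set m3 := κ.prod (κ.prod κ) with hm3
  set T1 : Set (ℝ × ℝ × ℝ) := {q | q.2.1 < q.1 ∧ q.2.2 < q.1} with hT1
  set T2 : Set (ℝ × ℝ × ℝ) := {q | q.1 < q.2.1 ∧ q.2.2 < q.2.1} with hT2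
  set T3 : Set (ℝ × ℝ × ℝ) := {q | q.1 < q.2.2 ∧ q.2.1 < q.2.2} with hT3
  set D12 : Set (ℝ × ℝ × ℝ) := {q | q.1 = q.2.1} with hD12
  set D13 : Set (ℝ × ℝ × ℝ) := {q | q.1 = q.2.2} with hD13
  set D23 : Set (ℝ × ℝ × ℝ) := {q | q.2.1 = q.2.2} with hD23
  have m1 : Measurable fun q : ℝ × ℝ × ℝ => q.1 := measurable_fst
  have m21 : Measurable fun q : ℝ × ℝ × ℝ => q.2.1 := measurable_snd.fst
  have m22 : Measurable fun q : ℝ × ℝ × ℝ => q.2.2 := measurable_snd.snd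
  have hT1m : MeasurableSet T1 := (measurableSet_lt m21 m1).inter (measurableSet_lt m22 m1)
  have hT2m : MeasurableSet T2 := (measurableSet_lt m1 m21).inter (measurableSet_lt m22 m21)
  have hT3m : MeasurableSet T3 := (measurableSet_lt m1 m22).inter (measurableSet_lt m21 m22)
  have hD12n : m3 D12 = 0 := by
    rw [hm3, Measure.prod_apply (measurableSet_eq_fun m1 m21)]
    have : ∀ t : ℝ, (κ.prod κ) (Prod.mk t ⁻¹' D12) = 0 := by
      intro t
      have : Prod.mk t ⁻¹' D12 = ({t} : Set ℝ) ×ˢ (univ : Set ℝ) := by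
        ext p
        simp only [Set.mem_preimage, hD12, Set.mem_setOf_eq, Set.mem_prod,
          Set.mem_singleton_iff, Set.mem_univ, and_true]
        exact eq_comm
      rw [this, Measure.prod_prod, h0, zero_mul]
    rw [lintegral_congr this]; simp
  have hD13n : m3 D13 = 0 := by
    rw [hm3, Measure.prod_apply (measurableSet_eq_fun m1 m22)]
    have : ∀ t : ℝ, (κ.prod κ) (Prod.mk t ⁻¹' D13) = 0 := by
      intro t
      have : Prod.mk t ⁻¹' D13 = (univ : Set ℝ) ×ˢ ({t} : Set ℝ) := by
        ext p
        simp only [Set.mem_preimage, hD13, Set.mem_setOf_eq, Set.mem_prod,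
          Set.mem_singleton_iff, Set.mem_univ, true_and]
        exact eq_comm
      rw [this, Measure.prod_prod, h0, mul_zero]
    rw [lintegral_congr this]; simp
  have hD23n : m3 D23 = 0 := by
    rw [hm3, Measure.prod_apply (measurableSet_eq_fun m21 m22)]
    have : ∀ t : ℝ, (κ.prod κ) (Prod.mk t ⁻¹' D23) = 0 := by
      intro t
      have : Prod.mk t ⁻¹' D23 = {p : ℝ × ℝ | p.1 = p.2} := rfl
      rw [this, diag_null κ h0]
    rw [lintegral_congr this]; simp
  have hT12 : m3 T2 = m3 T1 := by
    have hpre : (fun q : ℝ × ℝ × ℝ => (q.2.1, (q.1, q.2.2))) ⁻¹' T2 = T1 := rfl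
    rw [← hpre, (mp_rho κ).measure_preimage hT2m.nullMeasurableSet]
  have hT13 : m3 T3 = m3 T1 := by
    have hpre : (fun q : ℝ × ℝ × ℝ => (q.2.2, (q.2.1, q.1))) ⁻¹' T3 = T1 :=
      Set.ext fun q => and_comm
    rw [← hpre, (mp_rho' κ).measure_preimage hT3m.nullMeasurableSet]
  have hcover : ∀ q : ℝ × ℝ × ℝ, q ∈ T1 ∪ T2 ∪ T3 ∪ (D12 ∪ D13 ∪ D23) := by
    intro q
    simp only [hT1, hT2, hT3, hD12, hD13, hD23, Set.mem_union, Set.mem_setOf_eq]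
    rcases lt_trichotomy q.1 q.2.1 with h1 | h1 | h1 <;>
      rcases lt_trichotomy q.1 q.2.2 with h2 | h2 | h2 <;>
      rcases lt_trichotomy q.2.1 q.2.2 with h3 | h3 | h3 <;>
      first | tauto | (exfalso; linarith)
  have hone : m3 (T1 ∪ T2 ∪ T3) = 1 := by
    refine le_antisymm prob_le_one ?_
    have hsub : (univ : Set (ℝ × ℝ × ℝ)) ⊆ (T1 ∪ T2 ∪ T3) ∪ (D12 ∪ D13 ∪ D23) := by
      intro q _
      have := hcover q
      simp only [Set.mem_union] at this ⊢
      tauto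
    have h1 : (1 : ℝ≥0∞) = m3 univ := measure_univ.symm
    rw [h1]
    calc m3 univ ≤ m3 ((T1 ∪ T2 ∪ T3) ∪ (D12 ∪ D13 ∪ D23)) := measure_mono hsub
      _ ≤ m3 (T1 ∪ T2 ∪ T3) + m3 (D12 ∪ D13 ∪ D23) := measure_union_le _ _
      _ ≤ m3 (T1 ∪ T2 ∪ T3) + (m3 (D12 ∪ D13) + m3 D23) := by
          gcongr
          exact measure_union_le _ _
      _ ≤ m3 (T1 ∪ T2 ∪ T3) + ((m3 D12 + m3 D13) + m3 D23) := by
          gcongr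
          exact measure_union_le _ _
      _ = m3 (T1 ∪ T2 ∪ T3) := by rw [hD12n, hD13n, hD23n]; simp
  have hdisj12 : Disjoint T1 T2 := by
    simp only [Set.disjoint_left, hT1, hT2, Set.mem_setOf_eq]
    rintro q ⟨a, _⟩ ⟨c, _⟩; linarith
  have hdisj3 : Disjoint (T1 ∪ T2) T3 := by
    simp only [Set.disjoint_left, Set.mem_union, hT1, hT2, hT3, Set.mem_setOf_eq]
    rintro q (⟨a, b⟩ | ⟨a, b⟩) ⟨c, d⟩ <;> linarith
  have hsum : m3 T1 + m3 T2 + m3 T3 = 1 := by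
    rw [← measure_union hdisj12 hT2m, ← measure_union hdisj3 hT3m, hone]
  have h3T : 3 * m3 T1 = 1 := by
    rw [hT12, hT13] at hsum
    calc 3 * m3 T1 = m3 T1 + m3 T1 + m3 T1 := by ring
      _ = 1 := hsum
  have hT1val : m3 T1 = 1/3 := by
    rw [(ENNReal.eq_div_iff (by norm_num) (by norm_num) : m3 T1 = 1 / 3 ↔ _)]
    exact h3T
  have hSsub : {q : ℝ × ℝ × ℝ | q.2.1 ≤ q.1 ∧ q.2.2 ≤ q.1} ⊆ T1 ∪ (D12 ∪ D13) := by
    rintro q ⟨h1, h2⟩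
    rcases lt_or_eq_of_le h1 with h1' | h1'
    · rcases lt_or_eq_of_le h2 with h2' | h2'
      · exact Or.inl ⟨h1', h2'⟩
      · exact Or.inr (Or.inr h2'.symm)
    · exact Or.inr (Or.inl h1'.symm)
  refine le_antisymm ?_ ?_
  · calc m3 {q : ℝ × ℝ × ℝ | q.2.1 ≤ q.1 ∧ q.2.2 ≤ q.1} ≤ m3 (T1 ∪ (D12 ∪ D13)) :=
        measure_mono hSsub
    _ ≤ m3 T1 + m3 (D12 ∪ D13) := measure_union_le _ _
    _ ≤ m3 T1 + (m3 D12 + m3 D13) := by gcongr; exact measure_union_le _ _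
    _ = 1/3 := by rw [hD12n, hD13n, hT1val]; simp
  · rw [← hT1val]
    exact measure_mono fun q hq => ⟨le_of_lt hq.1, le_of_lt hq.2⟩

lemma meas_cdf (κ : Measure ℝ) : Measurable fun t => κ (Set.Iic t) :=
  Monotone.measurable fun _ _ hst => measure_mono (Set.Iic_subset_Iic.mpr hst)

lemma int_cdf (κ : Measure ℝ) [IsProbabilityMeasure κ] (h0 : ∀ t : ℝ, κ {t} = 0) :
    ∫ t, (κ (Set.Iic t)).toReal ∂κ = 1/2 := by
  have hm : Measurable fun t => κ (Set.Iic t) := meas_cdf κ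
  have hlt : ∀ᵐ t ∂κ, κ (Set.Iic t) < ∞ := ae_of_all _ fun t => measure_lt_top _ _
  rw [integral_toReal hm.aemeasurable hlt]
  have key : (κ.prod κ) {p : ℝ × ℝ | p.2 ≤ p.1} = ∫⁻ t, κ (Set.Iic t) ∂κ := by
    rw [Measure.prod_apply (measurableSet_le measurable_snd measurable_fst)]
    rfl
  rw [← key, half κ h0]
  simp [ENNReal.toReal_div]

lemma int_cdf_sq (κ : Measure ℝ) [IsProbabilityMeasure κ] (h0 : ∀ t : ℝ, κ {t} = 0) :
    ∫ t, ((κ (Set.Iic t)).toReal) ^ 2 ∂κ = 1/3 := by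
  have hm : Measurable fun t => (κ (Set.Iic t)) ^ 2 := (meas_cdf κ).pow_const 2
  have hlt : ∀ᵐ t ∂κ, (κ (Set.Iic t)) ^ 2 < ∞ :=
    ae_of_all _ fun t => ENNReal.pow_lt_top (measure_lt_top _ _)
  have heq : ∀ t : ℝ, ((κ (Set.Iic t)).toReal) ^ 2 = ((κ (Set.Iic t)) ^ 2).toReal := by
    intro t; rw [ENNReal.toReal_pow]
  rw [integral_congr_ae (ae_of_all _ heq), integral_toReal hm.aemeasurable hlt]
  have key : (κ.prod (κ.prod κ)) {q : ℝ × ℝ × ℝ | q.2.1 ≤ q.1 ∧ q.2.2 ≤ q.1}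
      = ∫⁻ t, (κ (Set.Iic t)) ^ 2 ∂κ := by
    have hSm : MeasurableSet {q : ℝ × ℝ × ℝ | q.2.1 ≤ q.1 ∧ q.2.2 ≤ q.1} :=
      ((measurableSet_le measurable_snd.fst measurable_fst)).inter
        (measurableSet_le measurable_snd.snd measurable_fst)
    rw [Measure.prod_apply hSm]
    congr 1
    funext t
    have : Prod.mk t ⁻¹' {q : ℝ × ℝ × ℝ | q.2.1 ≤ q.1 ∧ q.2.2 ≤ q.1}
        = Set.Iic t ×ˢ Set.Iic t := by
      ext p; simp only [Set.mem_preimage, Set.mem_setOf_eq, Set.mem_prod, Set.mem_Iic]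
    rw [this, Measure.prod_prod, sq]
  rw [← key, third κ h0]
  simp [ENNReal.toReal_div]

section Push

variable {X Y : Type*} [MeasurableSpace X] [MeasurableSpace Y]
  (Px : Measure X) (Py : Measure Y) [IsProbabilityMeasure Px] [IsProbabilityMeasure Py]
  {n : ℕ}

lemma mp_split : MeasurePreserving (fun Z : Fin n → X × Y => (fun i => (Z i).1, fun i => (Z i).2))
    (Measure.pi fun _ : Fin n => Px.prod Py)
    ((Measure.pi fun _ : Fin n => Px).prod (Measure.pi fun _ : Fin n => Py)) :=
  mp_congr (measurePreserving_arrowProdEquivProdArrow X Y (Fin n) (fun _ => Px) (fun _ => Py))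
    (fun Z => rfl)

lemma mp_T1 (a b : Fin n) :
    MeasurePreserving (fun Z : Fin n → X × Y => ((Z a).1, (Z b).2))
      (Measure.pi fun _ : Fin n => Px.prod Py) (Px.prod Py) :=
  mp_congr (((mp_eval Px a).prod (mp_eval Py b)).comp (mp_split Px Py)) (fun Z => rfl)

lemma mp_T2 {b d : Fin n} (hbd : b ≠ d) (a : Fin n) :
    MeasurePreserving (fun Z : Fin n → X × Y => ((Z a).1, ((Z b).2, (Z d).2)))
      (Measure.pi fun _ : Fin n => Px.prod Py) (Px.prod (Py.prod Py)) :=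
  mp_congr (((mp_eval Px a).prod (mp_pair Py hbd)).comp (mp_split Px Py)) (fun Z => rfl)

lemma mp_T3 {a c : Fin n} (hac : a ≠ c) (b : Fin n) :
    MeasurePreserving (fun Z : Fin n → X × Y => ((Z a).1, ((Z c).1, (Z b).2)))
      (Measure.pi fun _ : Fin n => Px.prod Py) (Px.prod (Px.prod Py)) :=
  mp_congr ((MeasureTheory.measurePreserving_prodAssoc Px Px Py).comp
    (((mp_pair Px hac).prod (mp_eval Py b)).comp (mp_split Px Py))) (fun Z => rfl)

lemma mp_shuffle :
    MeasurePreserving (fun q : (X × X) × (Y × Y) => ((q.1.1, q.2.1), (q.1.2, q.2.2)))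
      ((Px.prod Px).prod (Py.prod Py)) ((Px.prod Py).prod (Px.prod Py)) := by
  have s2 : MeasurePreserving (fun r : X × Y × Y => (r.2.1, (r.1, r.2.2)))
      (Px.prod (Py.prod Py)) (Py.prod (Px.prod Py)) :=
    mp_congr ((MeasureTheory.measurePreserving_prodAssoc Py Px Py).comp
      (((Measure.measurePreserving_swap (μ := Px) (ν := Py)).prod
          (MeasurePreserving.id Py)).comp
        ((MeasureTheory.measurePreserving_prodAssoc Px Py Py).symm
          MeasurableEquiv.prodAssoc))) fun r => rfl
  exact mp_congr (((MeasureTheory.measurePreserving_prodAssoc Px Py (Px.prod Py)).symm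
      MeasurableEquiv.prodAssoc).comp
    (((MeasurePreserving.id Px).prod s2).comp
      (MeasureTheory.measurePreserving_prodAssoc Px Px (Py.prod Py)))) fun q => rfl

lemma mp_T4 {a c b d : Fin n} (hac : a ≠ c) (hbd : b ≠ d) :
    MeasurePreserving (fun Z : Fin n → X × Y => (((Z a).1, (Z b).2), ((Z c).1, (Z d).2)))
      (Measure.pi fun _ : Fin n => Px.prod Py) ((Px.prod Py).prod (Px.prod Py)) :=
  mp_congr ((mp_shuffle Px Py).comp
    (((mp_pair Px hac).prod (mp_pair Py hbd)).comp (mp_split Px Py))) (fun Z => rfl)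

lemma mp_fst : MeasurePreserving (Prod.fst) (Px.prod Py) Px :=
  ⟨measurable_fst, by simp⟩

lemma mp_snd : MeasurePreserving (Prod.snd) (Px.prod Py) Py :=
  ⟨measurable_snd, by simp⟩

end Push

end Stmt6Aux


/-- Under the null hypothesis `P_{XY} = P_X × P_Y`, for an i.i.d. sample of
size `n ≥ 3` from the product measure with cyclic permutation, and a fixed measurable `θ̂`
atomless under the product measure, `Var(R̃) = σ*²/n`, where
`σ*² = 1/6 − 2 Cov(F₂(θ̂(X₂,Y₂)), F₂(θ̂(X₁,Y₂))) − 2 Cov(F₂(θ̂(X₂,Y₂)), F₂(θ̂(X₂,Y₃)))`,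
computed with `X₁, X₂` i.i.d. `P_X` and `Y₁, Y₂, Y₃` i.i.d. `P_Y`, all mutually independent. -/
theorem stmt_6 {X Y : Type*} [MeasurableSpace X] [MeasurableSpace Y]
    (Px : Measure X) (Py : Measure Y) [IsProbabilityMeasure Px] [IsProbabilityMeasure Py]
    (θ : X × Y → ℝ) (hθ : Measurable θ)
    (hcont : ∀ t : ℝ, (Px.prod Py) {z | θ z = t} = 0)
    (n : ℕ) (hn : 3 ≤ n)
    (F₂ : ℝ → ℝ) (hF₂ : F₂ = cdfOf (Px.prod Py) θ)
    (σstarSq : ℝ)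
    (hσ : σstarSq = 1 / 6
        - 2 * covFn (Px.prod (Px.prod Py))
            (fun p => F₂ (θ (p.2.1, p.2.2))) (fun p => F₂ (θ (p.1, p.2.2)))
        - 2 * covFn (Px.prod (Py.prod Py))
            (fun p => F₂ (θ (p.1, p.2.1))) (fun p => F₂ (θ (p.1, p.2.2)))) :
    variance (Rtilde F₂ θ) (Measure.pi fun _ : Fin n => Px.prod Py) = σstarSq / n := by
  classical
  haveI : NeZero n := ⟨by omega⟩
  have hn0 : (n : ℝ) ≠ 0 := by positivity
  -- G and basic properties
  have hF2mono : Monotone F₂ := by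
    intro s t hst
    rw [hF₂]
    exact ENNReal.toReal_mono (measure_ne_top _ _) (measure_mono fun z hz => le_trans hz hst)
  have hF2meas : Measurable F₂ := hF2mono.measurable
  set G : X × Y → ℝ := fun z => F₂ (θ z) with hG
  have hGmeas : Measurable G := hF2meas.comp hθ
  have hG0 : ∀ z, 0 ≤ G z := fun z => by
    show 0 ≤ F₂ (θ z); rw [hF₂]; exact ENNReal.toReal_nonneg
  have hG1 : ∀ z, G z ≤ 1 := fun z => by
    show F₂ (θ z) ≤ 1
    rw [hF₂]
    calc ((Px.prod Py) {w | θ w ≤ θ z}).toReal ≤ (1 : ℝ≥0∞).toReal :=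
          ENNReal.toReal_mono (by simp) prob_le_one
      _ = 1 := by simp
  have hGabs : ∀ z, |G z| ≤ 1 := fun z => abs_le.mpr ⟨by linarith [hG0 z], hG1 z⟩
  -- the pushforward distribution κ of θ̂
  set κ := (Px.prod Py).map θ with hκ
  haveI : IsProbabilityMeasure κ := Measure.isProbabilityMeasure_map hθ.aemeasurable
  have hκ0 : ∀ t : ℝ, κ {t} = 0 := by
    intro t
    rw [hκ, Measure.map_apply hθ (measurableSet_singleton t)]
    exact hcont t
  have hF2κ : ∀ t, F₂ t = (κ (Set.Iic t)).toReal := by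
    intro t
    rw [hF₂, hκ, Measure.map_apply hθ measurableSet_Iic]
    rfl
  -- first and second moments of G
  have hIG : ∫ z, G z ∂(Px.prod Py) = 1/2 := by
    calc ∫ z, G z ∂(Px.prod Py) = ∫ t, F₂ t ∂κ := by
          rw [hκ]; exact (integral_map hθ.aemeasurable hF2meas.aestronglyMeasurable).symm
      _ = ∫ t, (κ (Set.Iic t)).toReal ∂κ := integral_congr_ae (ae_of_all _ hF2κ)
      _ = 1/2 := Stmt6Aux.int_cdf κ hκ0
  have hIG2 : ∫ z, G z * G z ∂(Px.prod Py) = 1/3 := by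
    calc ∫ z, G z * G z ∂(Px.prod Py) = ∫ t, F₂ t * F₂ t ∂κ := by
          rw [hκ]
          exact (integral_map hθ.aemeasurable
            (hF2meas.mul hF2meas).aestronglyMeasurable).symm
      _ = ∫ t, ((κ (Set.Iic t)).toReal) ^ 2 ∂κ :=
          integral_congr_ae (ae_of_all _ fun t => by
            show F₂ t * F₂ t = ((κ (Set.Iic t)).toReal) ^ 2
            rw [hF2κ t]; ring)
      _ = 1/3 := Stmt6Aux.int_cdf_sq κ hκ0
  -- mixed second moments
  set MX := ∫ p, G (p.1, p.2.1) * G (p.1, p.2.2) ∂(Px.prod (Py.prod Py)) with hMX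
  set MY := ∫ p, G (p.2.1, p.2.2) * G (p.1, p.2.2) ∂(Px.prod (Px.prod Py)) with hMY
  -- rewrite the covariances
  have hsing1 : ∫ p, F₂ (θ (p.2.1, p.2.2)) ∂(Px.prod (Px.prod Py)) = 1/2 := by
    have h := Stmt6Aux.intcomp (Stmt6Aux.mp_snd Px (Px.prod Py)) hGmeas
    exact h.trans hIG
  have hsing2 : ∫ p, F₂ (θ (p.1, p.2.2)) ∂(Px.prod (Px.prod Py)) = 1/2 := by
    have hmp : MeasurePreserving (fun p : X × (X × Y) => (p.1, p.2.2))
        (Px.prod (Px.prod Py)) (Px.prod Py) :=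
      Stmt6Aux.mp_congr ((MeasurePreserving.id Px).prod (Stmt6Aux.mp_snd Px Py)) fun p => rfl
    exact (Stmt6Aux.intcomp hmp hGmeas).trans hIG
  have hsing3 : ∫ p, F₂ (θ (p.1, p.2.1)) ∂(Px.prod (Py.prod Py)) = 1/2 := by
    have hmp : MeasurePreserving (fun p : X × (Y × Y) => (p.1, p.2.1))
        (Px.prod (Py.prod Py)) (Px.prod Py) :=
      Stmt6Aux.mp_congr ((MeasurePreserving.id Px).prod (Stmt6Aux.mp_fst Py Py)) fun p => rfl
    exact (Stmt6Aux.intcomp hmp hGmeas).trans hIG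
  have hsing4 : ∫ p, F₂ (θ (p.1, p.2.2)) ∂(Px.prod (Py.prod Py)) = 1/2 := by
    have hmp : MeasurePreserving (fun p : X × (Y × Y) => (p.1, p.2.2))
        (Px.prod (Py.prod Py)) (Px.prod Py) :=
      Stmt6Aux.mp_congr ((MeasurePreserving.id Px).prod (Stmt6Aux.mp_snd Py Py)) fun p => rfl
    exact (Stmt6Aux.intcomp hmp hGmeas).trans hIG
  have hprodY : ∫ p, F₂ (θ (p.2.1, p.2.2)) * F₂ (θ (p.1, p.2.2)) ∂(Px.prod (Px.prod Py)) = MY :=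
    hMY.symm
  have hprodX : ∫ p, F₂ (θ (p.1, p.2.1)) * F₂ (θ (p.1, p.2.2)) ∂(Px.prod (Py.prod Py)) = MX :=
    hMX.symm
  have hcovY : covFn (Px.prod (Px.prod Py))
      (fun p => F₂ (θ (p.2.1, p.2.2))) (fun p => F₂ (θ (p.1, p.2.2))) = MY - (1/2) * (1/2) := by
    simp only [covFn]
    rw [hprodY, hsing1, hsing2]
  have hcovX : covFn (Px.prod (Py.prod Py))
      (fun p => F₂ (θ (p.1, p.2.1))) (fun p => F₂ (θ (p.1, p.2.2))) = MX - (1/2) * (1/2) := by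
    simp only [covFn]
    rw [hprodX, hsing3, hsing4]
  rw [hcovY, hcovX] at hσ
  -- the sampling measure
  set μp := Measure.pi (fun _ : Fin n => Px.prod Py) with hμp
  haveI : IsProbabilityMeasure μp := by rw [hμp]; infer_instance
  -- measurability and integrability of the building blocks
  have hTmeas : ∀ a b : Fin n, Measurable fun Z : Fin n → X × Y => G ((Z a).1, (Z b).2) :=
    fun a b => hGmeas.comp ((measurable_pi_apply a).fst.prodMk (measurable_pi_apply b).snd)
  have hTint : ∀ a b : Fin n, Integrable (fun Z : Fin n → X × Y => G ((Z a).1, (Z b).2)) μp :=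
    fun a b => Stmt6Aux.integrable_of_bdd (hTmeas a b) (C := 1) fun Z => hGabs _
  have hprodint : ∀ a b c d : Fin n,
      Integrable (fun Z : Fin n → X × Y => G ((Z a).1, (Z b).2) * G ((Z c).1, (Z d).2)) μp := by
    intro a b c d
    refine Stmt6Aux.integrable_of_bdd ((hTmeas a b).mul (hTmeas c d)) (C := 1) fun Z => ?_
    rw [abs_mul]
    exact mul_le_one₀ (hGabs _) (abs_nonneg _) (hGabs _)
  -- J-values
  have hJsingle : ∀ a b : Fin n, ∫ Z, G ((Z a).1, (Z b).2) ∂μp = 1/2 := by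
    intro a b
    rw [hμp]
    exact (Stmt6Aux.intcomp (Stmt6Aux.mp_T1 Px Py a b) hGmeas).trans hIG
  have hJ0 : ∀ a b : Fin n,
      ∫ Z, G ((Z a).1, (Z b).2) * G ((Z a).1, (Z b).2) ∂μp = 1/3 := by
    intro a b
    rw [hμp]
    exact (Stmt6Aux.intcomp (Stmt6Aux.mp_T1 Px Py a b) (hGmeas.mul hGmeas)).trans hIG2
  have hJX : ∀ a b d : Fin n, b ≠ d →
      ∫ Z, G ((Z a).1, (Z b).2) * G ((Z a).1, (Z d).2) ∂μp = MX := by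
    intro a b d hbd
    rw [hμp]
    have hfX : Measurable fun p : X × (Y × Y) => G (p.1, p.2.1) * G (p.1, p.2.2) :=
      (hGmeas.comp (measurable_fst.prodMk measurable_snd.fst)).mul
        (hGmeas.comp (measurable_fst.prodMk measurable_snd.snd))
    exact (Stmt6Aux.intcomp (Stmt6Aux.mp_T2 Px Py hbd a) hfX).trans hMX.symm
  have hJY : ∀ a c b : Fin n, a ≠ c →
      ∫ Z, G ((Z a).1, (Z b).2) * G ((Z c).1, (Z b).2) ∂μp = MY := by
    intro a c b hac
    rw [hμp]
    have hfY : Measurable fun p : X × (X × Y) => G (p.1, p.2.2) * G (p.2.1, p.2.2) :=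
      (hGmeas.comp (measurable_fst.prodMk measurable_snd.snd)).mul
        (hGmeas.comp (measurable_snd.fst.prodMk measurable_snd.snd))
    refine (Stmt6Aux.intcomp (Stmt6Aux.mp_T3 Px Py hac b) hfY).trans ?_
    refine (integral_congr_ae (ae_of_all _ fun p => mul_comm _ _)).trans hMY.symm
  have hJI : ∀ a b c d : Fin n, a ≠ c → b ≠ d →
      ∫ Z, G ((Z a).1, (Z b).2) * G ((Z c).1, (Z d).2) ∂μp = 1/4 := by
    intro a b c d hac hbd
    rw [hμp]
    have hfI : Measurable fun q : (X × Y) × (X × Y) => G q.1 * G q.2 :=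
      (hGmeas.comp measurable_fst).mul (hGmeas.comp measurable_snd)
    refine (Stmt6Aux.intcomp (Stmt6Aux.mp_T4 Px Py hac hbd) hfI).trans ?_
    rw [integral_prod_mul G G, hIG]
    norm_num
  -- Fin-index facts
  have hval1 : (1 : Fin n).val = 1 := by
    rw [Fin.val_one']; exact Nat.mod_eq_of_lt (by omega)
  have h1ne : (1 : Fin n) ≠ 0 := by
    intro h; have := congrArg Fin.val h; rw [hval1] at this; simp at this
  have hval2 : ((1 : Fin n) + 1).val = 2 := by
    rw [Fin.val_add, hval1]; exact Nat.mod_eq_of_lt (by omega)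
  have h2ne : (1 : Fin n) + 1 ≠ 0 := by
    intro h; have := congrArg Fin.val h; rw [hval2] at this; simp at this
  have hcyc : ∀ i : Fin n, cycIdx i = i + 1 := by
    intro i
    apply Fin.ext
    show (i.val + 1) % n = ((i + 1 : Fin n)).val
    rw [Fin.val_add, hval1]
  have g1 : ∀ i : Fin n, i + 1 ≠ i := by
    intro i h
    nth_rewrite 2 [← add_zero i] at h
    exact h1ne (add_left_cancel h)
  have g2 : ∀ i : Fin n, i + 1 + 1 ≠ i := by
    intro i h
    rw [add_assoc] at h
    nth_rewrite 2 [← add_zero i] at h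
    exact h2ne (add_left_cancel h)
  -- rewrite Rtilde
  have hRw : Rtilde (n := n) F₂ θ = fun Z : Fin n → X × Y =>
      (n : ℝ)⁻¹ * ∑ i : Fin n, (G ((Z i).1, (Z (i + 1)).2) - G ((Z i).1, (Z i).2)) := by
    funext Z
    unfold Rtilde
    rw [← mul_add, ← Finset.sum_add_distrib]
    congr 1
    refine Finset.sum_congr rfl fun i _ => ?_
    simp only [cyc, hcyc, hG, Prod.mk.eta]
    ring
  rw [hRw]
  set R : (Fin n → X × Y) → ℝ := fun Z =>
    (n : ℝ)⁻¹ * ∑ i : Fin n, (G ((Z i).1, (Z (i + 1)).2) - G ((Z i).1, (Z i).2)) with hR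
  have hRmeas : Measurable R := by
    apply Measurable.const_mul
    exact Finset.measurable_sum _ fun i _ => (hTmeas i (i + 1)).sub (hTmeas i i)
  have hWabs : ∀ (i : Fin n) (Z : Fin n → X × Y),
      |G ((Z i).1, (Z (i + 1)).2) - G ((Z i).1, (Z i).2)| ≤ 1 := by
    intro i Z
    rw [abs_sub_le_iff]
    constructor <;> [skip; skip] <;>
      first
        | linarith [hG0 ((Z i).1, (Z i).2), hG1 ((Z i).1, (Z (i + 1)).2)]
        | linarith [hG0 ((Z i).1, (Z (i + 1)).2), hG1 ((Z i).1, (Z i).2)]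
  have hRabs : ∀ Z, |R Z| ≤ 1 := by
    intro Z
    rw [hR]
    calc |(n : ℝ)⁻¹ * ∑ i : Fin n, (G ((Z i).1, (Z (i + 1)).2) - G ((Z i).1, (Z i).2))|
        = |(n : ℝ)⁻¹| * |∑ i : Fin n, (G ((Z i).1, (Z (i + 1)).2) - G ((Z i).1, (Z i).2))| :=
          abs_mul _ _
      _ ≤ (n : ℝ)⁻¹ * n := by
          rw [abs_of_nonneg (by positivity : (0:ℝ) ≤ (n : ℝ)⁻¹)]
          gcongr
          calc |∑ i : Fin n, (G ((Z i).1, (Z (i + 1)).2) - G ((Z i).1, (Z i).2))|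
              ≤ ∑ i : Fin n, |G ((Z i).1, (Z (i + 1)).2) - G ((Z i).1, (Z i).2)| :=
                Finset.abs_sum_le_sum_abs _ _
            _ ≤ ∑ _i : Fin n, (1 : ℝ) := Finset.sum_le_sum fun i _ => hWabs i Z
            _ = n := by simp
      _ = 1 := by field_simp
  have hmem : MemLp R 2 μp :=
    MemLp.of_bound hRmeas.aestronglyMeasurable 1
      (ae_of_all _ fun Z => by rw [Real.norm_eq_abs]; exact hRabs Z)
  -- mean zero
  have hWint : ∀ i : Fin n,
      Integrable (fun Z : Fin n → X × Y => G ((Z i).1, (Z (i + 1)).2) - G ((Z i).1, (Z i).2)) μp :=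
    fun i => Stmt6Aux.integrable_of_bdd ((hTmeas i (i + 1)).sub (hTmeas i i)) (C := 1)
      fun Z => hWabs i Z
  have hmean : ∫ Z, R Z ∂μp = 0 := by
    rw [hR]
    rw [integral_const_mul]
    rw [integral_finset_sum _ fun i _ => hWint i]
    have : ∀ i ∈ Finset.univ, ∫ Z, (G ((Z i).1, (Z (i + 1)).2) - G ((Z i).1, (Z i).2)) ∂μp
        = 0 := by
      intro i _
      rw [integral_sub (hTint i (i + 1)) (hTint i i), hJsingle, hJsingle]
      ring
    rw [Finset.sum_congr rfl this]
    simp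
  -- per-pair expectations
  have hterm : ∀ i j : Fin n,
      ∫ Z, (G ((Z i).1, (Z (i + 1)).2) - G ((Z i).1, (Z i).2))
          * (G ((Z j).1, (Z (j + 1)).2) - G ((Z j).1, (Z j).2)) ∂μp
      = (if j = i then 2/3 - 2 * MX else 0) + (if j = i + 1 then 1/4 - MY else 0)
          + (if i = j + 1 then 1/4 - MY else 0) := by
    intro i j
    have hexpand : ∫ Z, (G ((Z i).1, (Z (i + 1)).2) - G ((Z i).1, (Z i).2))
          * (G ((Z j).1, (Z (j + 1)).2) - G ((Z j).1, (Z j).2)) ∂μp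
        = ((∫ Z, G ((Z i).1, (Z (i + 1)).2) * G ((Z j).1, (Z (j + 1)).2) ∂μp)
            - ∫ Z, G ((Z i).1, (Z (i + 1)).2) * G ((Z j).1, (Z j).2) ∂μp)
          - ((∫ Z, G ((Z i).1, (Z i).2) * G ((Z j).1, (Z (j + 1)).2) ∂μp)
            - ∫ Z, G ((Z i).1, (Z i).2) * G ((Z j).1, (Z j).2) ∂μp) := by
      rw [← integral_sub (hprodint i (i+1) j (j+1)) (hprodint i (i+1) j j),
        ← integral_sub (hprodint i i j (j+1)) (hprodint i i j j),
        ← integral_sub]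
      · exact integral_congr_ae (ae_of_all _ fun Z => by ring)
      · exact (hprodint i (i+1) j (j+1)).sub (hprodint i (i+1) j j)
      · exact (hprodint i i j (j+1)).sub (hprodint i i j j)
    rw [hexpand]
    by_cases h1 : j = i
    · subst h1
      rw [if_pos rfl]
      simp only [if_neg (Ne.symm (g1 j))]
      rw [hJ0 j (j + 1), hJX j (j + 1) j (g1 j), hJX j j (j + 1) (Ne.symm (g1 j)), hJ0 j j]
      ring
    · by_cases h2 : j = i + 1
      · subst h2
        rw [if_pos rfl]
        simp only [if_neg h1, if_neg (Ne.symm (g2 i))]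
        rw [hJI i (i + 1) (i + 1) (i + 1 + 1) (Ne.symm (g1 i)) (Ne.symm (g1 (i + 1))),
          hJY i (i + 1) (i + 1) (Ne.symm (g1 i)),
          hJI i i (i + 1) (i + 1 + 1) (Ne.symm (g1 i)) (Ne.symm (g2 i)),
          hJI i i (i + 1) (i + 1) (Ne.symm (g1 i)) (Ne.symm (g1 i))]
        ring
      · by_cases h3 : i = j + 1
        · subst h3
          rw [if_pos rfl]
          simp only [if_neg h1, if_neg h2]
          rw [hJI (j + 1) (j + 1 + 1) j (j + 1) (g1 j) (g1 (j + 1)),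
            hJI (j + 1) (j + 1 + 1) j j (g1 j) (g2 j),
            hJY (j + 1) j (j + 1) (g1 j),
            hJI (j + 1) (j + 1) j j (g1 j) (g1 j)]
          ring
        · simp only [if_neg h1, if_neg h2, if_neg h3]
          have hij : i ≠ j := fun h => h1 h.symm
          have hbd1 : i + 1 ≠ j + 1 := fun h => h1 (add_right_cancel h).symm
          have hbd2 : i + 1 ≠ j := fun h => h2 h.symm
          have hbd3 : i ≠ j + 1 := h3
          rw [hJI i (i + 1) j (j + 1) hij hbd1, hJI i (i + 1) j j hij hbd2,
            hJI i i j (j + 1) hij hbd3, hJI i i j j hij hij]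
          ring
  -- second moment
  have hsq : ∫ Z, R Z ^ 2 ∂μp = (n : ℝ)⁻¹ ^ 2 * (n * ((2/3 - 2 * MX) + 2 * (1/4 - MY))) := by
    have hstep1 : ∫ Z, R Z ^ 2 ∂μp = (n : ℝ)⁻¹ ^ 2 *
        ∫ Z, ∑ i : Fin n, ∑ j : Fin n,
          (G ((Z i).1, (Z (i + 1)).2) - G ((Z i).1, (Z i).2))
            * (G ((Z j).1, (Z (j + 1)).2) - G ((Z j).1, (Z j).2)) ∂μp := by
      rw [← integral_const_mul]
      refine integral_congr_ae (ae_of_all _ fun Z => ?_)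
      show ((n : ℝ)⁻¹ * ∑ i : Fin n, (G ((Z i).1, (Z (i + 1)).2) - G ((Z i).1, (Z i).2))) ^ 2 = _
      have hs := Finset.sum_mul_sum (Finset.univ : Finset (Fin n))
        (Finset.univ : Finset (Fin n))
        (fun i => G ((Z i).1, (Z (i + 1)).2) - G ((Z i).1, (Z i).2))
        (fun j => G ((Z j).1, (Z (j + 1)).2) - G ((Z j).1, (Z j).2))
      calc ((n : ℝ)⁻¹ * ∑ i : Fin n, (G ((Z i).1, (Z (i + 1)).2) - G ((Z i).1, (Z i).2))) ^ 2
          = (n : ℝ)⁻¹ ^ 2 * ((∑ i : Fin n, (G ((Z i).1, (Z (i + 1)).2) - G ((Z i).1, (Z i).2)))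
              * ∑ j : Fin n, (G ((Z j).1, (Z (j + 1)).2) - G ((Z j).1, (Z j).2))) := by ring
        _ = _ := by rw [hs]
    rw [hstep1]
    have hstep2 : ∫ Z, ∑ i : Fin n, ∑ j : Fin n,
          (G ((Z i).1, (Z (i + 1)).2) - G ((Z i).1, (Z i).2))
            * (G ((Z j).1, (Z (j + 1)).2) - G ((Z j).1, (Z j).2)) ∂μp
        = ∑ i : Fin n, ∑ j : Fin n,
          ∫ Z, (G ((Z i).1, (Z (i + 1)).2) - G ((Z i).1, (Z i).2))
            * (G ((Z j).1, (Z (j + 1)).2) - G ((Z j).1, (Z j).2)) ∂μp := by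
      rw [integral_finset_sum]
      · refine Finset.sum_congr rfl fun i _ => ?_
        rw [integral_finset_sum]
        intro j _
        refine Stmt6Aux.integrable_of_bdd
          (((hTmeas i (i+1)).sub (hTmeas i i)).mul ((hTmeas j (j+1)).sub (hTmeas j j)))
          (C := 1) fun Z => ?_
        rw [abs_mul]
        exact mul_le_one₀ (hWabs i Z) (abs_nonneg _) (hWabs j Z)
      · intro i _
        refine Stmt6Aux.integrable_of_bdd
          (Finset.measurable_sum _ fun j _ =>
            (((hTmeas i (i+1)).sub (hTmeas i i)).mul ((hTmeas j (j+1)).sub (hTmeas j j))))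
          (C := n) fun Z => ?_
        calc |∑ j : Fin n, (G ((Z i).1, (Z (i + 1)).2) - G ((Z i).1, (Z i).2))
              * (G ((Z j).1, (Z (j + 1)).2) - G ((Z j).1, (Z j).2))|
            ≤ ∑ j : Fin n, |(G ((Z i).1, (Z (i + 1)).2) - G ((Z i).1, (Z i).2))
              * (G ((Z j).1, (Z (j + 1)).2) - G ((Z j).1, (Z j).2))| :=
              Finset.abs_sum_le_sum_abs _ _
          _ ≤ ∑ _j : Fin n, (1 : ℝ) := by
              refine Finset.sum_le_sum fun j _ => ?_
              rw [abs_mul]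
              exact mul_le_one₀ (hWabs i Z) (abs_nonneg _) (hWabs j Z)
          _ = n := by simp
    rw [hstep2]
    congr 1
    have hinner : ∀ i : Fin n, ∑ j : Fin n,
        ((if j = i then 2/3 - 2 * MX else 0) + (if j = i + 1 then 1/4 - MY else 0)
          + (if i = j + 1 then 1/4 - MY else 0))
        = (2/3 - 2 * MX) + 2 * (1/4 - MY) := by
      intro i
      rw [Finset.sum_add_distrib, Finset.sum_add_distrib]
      have s1 : ∑ j : Fin n, (if j = i then 2/3 - 2 * MX else 0) = 2/3 - 2 * MX := by
        rw [Finset.sum_ite_eq' Finset.univ i fun _ => 2/3 - 2 * MX]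
        simp
      have s2 : ∑ j : Fin n, (if j = i + 1 then 1/4 - MY else 0) = 1/4 - MY := by
        rw [Finset.sum_ite_eq' Finset.univ (i + 1) fun _ => 1/4 - MY]
        simp
      have s3 : ∑ j : Fin n, (if i = j + 1 then 1/4 - MY else 0) = 1/4 - MY := by
        have hc : ∀ j : Fin n, (if i = j + 1 then (1/4 - MY : ℝ) else 0)
            = (if j = i - 1 then (1/4 - MY : ℝ) else 0) := by
          intro j
          refine if_congr ?_ rfl rfl
          constructor
          · intro h; rw [h]; abel
          · intro h; rw [h]; abel
        rw [Finset.sum_congr rfl fun j _ => hc j,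
          Finset.sum_ite_eq' Finset.univ (i - 1) fun _ => 1/4 - MY]
        simp
      rw [s1, s2, s3]
      ring
    calc ∑ i : Fin n, ∑ j : Fin n,
          ∫ Z, (G ((Z i).1, (Z (i + 1)).2) - G ((Z i).1, (Z i).2))
            * (G ((Z j).1, (Z (j + 1)).2) - G ((Z j).1, (Z j).2)) ∂μp
        = ∑ i : Fin n, ((2/3 - 2 * MX) + 2 * (1/4 - MY)) := by
          refine Finset.sum_congr rfl fun i _ => ?_
          rw [Finset.sum_congr rfl fun j _ => hterm i j]
          exact hinner i
      _ = n * ((2/3 - 2 * MX) + 2 * (1/4 - MY)) := by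
          rw [Finset.sum_const, Finset.card_univ, Fintype.card_fin, nsmul_eq_mul]
  -- conclude
  rw [variance_eq_sub hmem]
  have hRsq : μp[R ^ 2] = ∫ Z, R Z ^ 2 ∂μp := by
    refine integral_congr_ae (ae_of_all _ fun Z => ?_)
    simp [Pi.pow_apply]
  rw [hRsq, hsq]
  have hRmean : μp[R] = 0 := hmean
  rw [hRmean, hσ]
  field_simp
  ring
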